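/- Let 0 < μ ≤ 1 and ν > 0, and let g_{μ,ν} be the inner product on 𝔤_1 with matrix diag(1, μ, ν) in the basis e₀, e₁, e₂, with Ricci form Ric. Then the only endomorphism of 𝔤_1 that is skew-symmetric with respect to both g_{μ,ν} and Ric is 0. (Hence the isotropy of the isometry group of (G₁, g_{μ,ν}) is discrete and the full isometry group is G₁ itself.) -/

import Mathlib

noncomputable section
set_option maxHeartbeats 2000000

open scoped BigOperators

/-- The underlying space of the 3-dimensional Lie algebras under consideration. -/
abbrev V3 : Type := Fin 3 → ℝ

/-- The standard basis `e₀, e₁, e₂`. -/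
def e3 (i : Fin 3) : V3 := Pi.single i 1

/-- The bracket of the Lie algebra `𝔤_c`:
`[e₀,e₁] = 0`, `[e₂,e₀] = e₁`, `[e₂,e₁] = −c e₀ + 2 e₁`, extended bilinearly. -/
def braC (c : ℝ) (x y : V3) : V3 :=
  ![-c * (x 2 * y 1 - y 2 * x 1),
    (x 2 * y 0 - y 2 * x 0) + 2 * (x 2 * y 1 - y 2 * x 1),
    0]

/-- The inner product with matrix `diag(1,μ,ν)` in the basis `e₀,e₁,e₂`. -/
def gD (μ ν : ℝ) (x y : V3) : ℝ := x 0 * y 0 + μ * (x 1 * y 1) + ν * (x 2 * y 2)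

/-- The curvature tensor `R(X,Y)Z = ∇_X ∇_Y Z − ∇_Y ∇_X Z − ∇_{[X,Y]} Z`. -/
def Rc (br nab : V3 → V3 → V3) (X Y Z : V3) : V3 :=
  nab X (nab Y Z) - nab Y (nab X Z) - nab (br X Y) Z

/-- The Ricci form `Ric(X,Y) = tr (Z ↦ R(Z,X)Y)`. -/
def RicF (br nab : V3 → V3 → V3) (X Y : V3) : ℝ :=
  ∑ k : Fin 3, Rc br nab (e3 k) X Y k

/-- Explicit Levi-Civita product of `g_{μ,ν}` on `𝔤₁`. -/
def nabF (μ ν : ℝ) (x y : V3) : V3 :=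
  ![ (1-μ)/2 * (x 1 * y 2) - (1+μ)/2 * (x 2 * y 1),
     (1/μ-1)/2 * (x 0 * y 2) + (1/μ+1)/2 * (x 2 * y 0) - 2 * (x 1 * y 2),
     (μ-1)/(2*ν) * (x 0 * y 1 + x 1 * y 0) + 2*μ/ν * (x 1 * y 1) ]

lemma nab_eq_nabF (μ ν : ℝ) (hμ : μ ≠ 0) (hν : ν ≠ 0) (nab : V3 → V3 → V3)
    (hK : ∀ X Y Z : V3, 2 * gD μ ν (nab X Y) Z =
      gD μ ν (braC 1 X Y) Z - gD μ ν (braC 1 Y Z) X + gD μ ν (braC 1 Z X) Y) :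
    nab = nabF μ ν := by
  funext X Y
  funext i
  fin_cases i
  · have h := hK X Y (e3 0)
    simp [gD, braC, e3, Pi.single_apply, nabF] at h ⊢
    field_simp at h ⊢
    linarith
  · have h := hK X Y (e3 1)
    simp [gD, braC, e3, Pi.single_apply, nabF] at h ⊢
    field_simp at h ⊢
    linarith
  · have h := hK X Y (e3 2)
    simp [gD, braC, e3, Pi.single_apply, nabF] at h ⊢
    field_simp at h ⊢
    linear_combination h

lemma ric_eval (μ ν : ℝ) (hμ : μ ≠ 0) (hν : ν ≠ 0) (x y : V3) :
    ν * μ * 2 * RicF (braC 1) (nabF μ ν) x y =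
      (1 - μ^2) * (x 0 * y 0) - 4*μ^2 * (x 0 * y 1 + x 1 * y 0)
      + μ*(μ^2 - 8*μ - 1) * (x 1 * y 1) - ν*(1 + 6*μ + μ^2) * (x 2 * y 2) := by
  have h0 : e3 0 = ![1,0,0] := by funext i; fin_cases i <;> simp [e3, Pi.single_apply]
  have h1 : e3 1 = ![0,1,0] := by funext i; fin_cases i <;> simp [e3, Pi.single_apply]
  have h2 : e3 2 = ![0,0,1] := by funext i; fin_cases i <;> simp [e3, Pi.single_apply]
  simp only [RicF, Rc, Fin.sum_univ_three, Pi.sub_apply, h0, h1, h2, nabF, braC,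
    Matrix.cons_val_zero, Matrix.cons_val_one, Matrix.head_cons, Matrix.cons_val_two,
    Matrix.tail_cons]
  field_simp
  ring

/-- Pure linear algebra endgame. -/
lemma solve_entries (μ ν a01 a10 a02 a20 a12 a21 : ℝ)
    (hμ : 0 < μ) (hμ1 : μ ≤ 1) (hν : 0 < ν)
    (g1 : a01 + μ * a10 = 0) (g2 : a02 + ν * a20 = 0) (g3 : μ * a12 + ν * a21 = 0)
    (r1 : μ*(μ^2 - 8*μ - 1) * a10 + (1 - μ^2) * a01 = 0)
    (r2 : -(ν*(1 + 6*μ + μ^2)) * a20 + (1 - μ^2) * a02 - 4*μ^2 * a12 = 0)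
    (r3 : -(ν*(1 + 6*μ + μ^2)) * a21 - 4*μ^2 * a02 + μ*(μ^2 - 8*μ - 1) * a12 = 0) :
    a01 = 0 ∧ a10 = 0 ∧ a02 = 0 ∧ a20 = 0 ∧ a12 = 0 ∧ a21 = 0 := by
  have h10 : 2*μ*(μ^2 - 4*μ - 1) * a10 = 0 := by
    linear_combination r1 - (1 - μ^2) * g1
  have hc10 : 2*μ*(μ^2 - 4*μ - 1) ≠ 0 := by nlinarith
  have ha10 : a10 = 0 := by
    rcases mul_eq_zero.mp h10 with h | h
    · exact absurd h hc10
    · exact h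
  have ha01 : a01 = 0 := by
    have := g1; rw [ha10] at this; linarith
  -- the (a02, a12) system
  have e1 : (2 + 6*μ) * a02 - 4*μ^2 * a12 = 0 := by
    linear_combination r2 + (1 + 6*μ + μ^2) * g2
  have e2 : 2*μ^2*((μ - 1) * a12 - 2 * a02) = 0 := by
    linear_combination r3 + (1 + 6*μ + μ^2) * g3
  have ha02' : (μ + 1)^2 * a02 = 0 := by
    linear_combination (-(μ - 1)/2) * e1 - e2
  have ha02 : a02 = 0 := by
    rcases mul_eq_zero.mp ha02' with h | h
    · nlinarith
    · exact h
  have ha12 : a12 = 0 := by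
    have h' : 4*μ^2 * a12 = 0 := by rw [ha02] at e1; linarith
    rcases mul_eq_zero.mp h' with h | h
    · nlinarith
    · exact h
  have ha20 : a20 = 0 := by
    have h' : ν * a20 = 0 := by rw [ha02] at g2; linarith
    rcases mul_eq_zero.mp h' with h | h
    · exact absurd h hν.ne'
    · exact h
  have ha21 : a21 = 0 := by
    have h' : ν * a21 = 0 := by rw [ha12] at g3; linarith
    rcases mul_eq_zero.mp h' with h | h
    · exact absurd h hν.ne'
    · exact h
  exact ⟨ha01, ha10, ha02, ha20, ha12, ha21⟩

/-- the only endomorphism of `𝔤_1` that is skew-symmetric with respect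
to both `g_{μ,ν}` and its Ricci form is `0`. -/
theorem stmt8 (μ ν : ℝ) (hμ : 0 < μ) (hμ1 : μ ≤ 1) (hν : 0 < ν) (nab : V3 → V3 → V3)
    (hK : ∀ X Y Z : V3, 2 * gD μ ν (nab X Y) Z =
      gD μ ν (braC 1 X Y) Z - gD μ ν (braC 1 Y Z) X + gD μ ν (braC 1 Z X) Y) :
    ∀ A : Module.End ℝ V3,
      (∀ x y : V3, gD μ ν (A x) y + gD μ ν x (A y) = 0) →
      (∀ x y : V3, RicF (braC 1) nab (A x) y + RicF (braC 1) nab x (A y) = 0) →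
      A = 0 := by
  intro A hA1 hA2
  have hnab : nab = nabF μ ν := nab_eq_nabF μ ν hμ.ne' hν.ne' nab hK
  rw [hnab] at hA2
  have he : ∀ i j : Fin 3, e3 i j = if j = i then 1 else 0 := fun i j => by
    simp [e3, Pi.single_apply]
  have hd0 : A (e3 0) 0 = 0 := by
    have h := hA1 (e3 0) (e3 0)
    simp [gD, he] at h
    linarith
  have hd1 : A (e3 1) 1 = 0 := by
    have h := hA1 (e3 1) (e3 1)
    simp [gD, he] at h
    rcases h with h | h
    · exact absurd h hμ.ne'
    · exact h
  have hd2 : A (e3 2) 2 = 0 := by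
    have h := hA1 (e3 2) (e3 2)
    simp [gD, he] at h
    rcases h with h | h
    · exact absurd h hν.ne'
    · exact h
  have hg1 : A (e3 1) 0 + μ * A (e3 0) 1 = 0 := by
    have h := hA1 (e3 1) (e3 0)
    simp [gD, he] at h
    linarith
  have hg2 : A (e3 2) 0 + ν * A (e3 0) 2 = 0 := by
    have h := hA1 (e3 2) (e3 0)
    simp [gD, he] at h
    linarith
  have hg3 : μ * A (e3 2) 1 + ν * A (e3 1) 2 = 0 := by
    have h := hA1 (e3 2) (e3 1)
    simp [gD, he] at h
    linarith
  have hE : ∀ x y : V3,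
      ν * μ * 2 * RicF (braC 1) (nabF μ ν) (A x) y
      + ν * μ * 2 * RicF (braC 1) (nabF μ ν) x (A y) = 0 := by
    intro x y
    linear_combination (ν * μ * 2) * hA2 x y
  have hE01 := hE (e3 0) (e3 1)
  have hE02 := hE (e3 0) (e3 2)
  have hE12 := hE (e3 1) (e3 2)
  rw [ric_eval μ ν hμ.ne' hν.ne', ric_eval μ ν hμ.ne' hν.ne'] at hE01 hE02 hE12
  simp [he] at hE01 hE02 hE12
  have r1 : μ*(μ^2 - 8*μ - 1) * A (e3 0) 1 + (1 - μ^2) * A (e3 1) 0 = 0 := by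
    linear_combination hE01 + 4*μ^2 * hd0 + 4*μ^2 * hd1
  have r2 : -(ν*(1 + 6*μ + μ^2)) * A (e3 0) 2 + (1 - μ^2) * A (e3 2) 0
      - 4*μ^2 * A (e3 2) 1 = 0 := by
    linear_combination hE02
  have r3 : -(ν*(1 + 6*μ + μ^2)) * A (e3 1) 2 - 4*μ^2 * A (e3 2) 0
      + μ*(μ^2 - 8*μ - 1) * A (e3 2) 1 = 0 := by
    linear_combination hE12
  obtain ⟨h01, h10, h02, h20, h12, h21⟩ :=
    solve_entries μ ν (A (e3 1) 0) (A (e3 0) 1) (A (e3 2) 0) (A (e3 0) 2)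
      (A (e3 2) 1) (A (e3 1) 2) hμ hμ1 hν hg1 hg2 hg3 r1 r2 r3
  have hAe0 : A (e3 0) = 0 := by
    funext i; fin_cases i
    · simpa using hd0
    · simpa using h10
    · simpa using h20
  have hAe1 : A (e3 1) = 0 := by
    funext i; fin_cases i
    · simpa using h01
    · simpa using hd1
    · simpa using h21
  have hAe2 : A (e3 2) = 0 := by
    funext i; fin_cases i
    · simpa using h02
    · simpa using h12
    · simpa using hd2
  apply LinearMap.ext
  intro x
  have hx : x = x 0 • e3 0 + (x 1 • e3 1 + x 2 • e3 2) := by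
    funext i; fin_cases i <;> simp [e3, Pi.single_apply]
  rw [hx]
  simp [map_add, map_smul, hAe0, hAe1, hAe2]
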